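/- There is no sequence of non-negative integers (a_v) indexed by multidegrees v of degree-6 cd-monomials realizable as dimensions of graded pieces of a standard multigraded algebra generated in degrees e_1,...,e_6, with values a_{c^6}=1, a_{dc^4}=a_{c^2dc^2}=a_{c^4d}=2, a_{c^2d^2}=a_{dc^2d}=a_{d^2c^2}=1, a_{d^3}=2. Concretely: there is no commutative ℤ^6-graded k-algebra A with A_0 = k, generated by the pieces A_{e_i}, such that dim A_{e_1}=dim A_{e_3}=dim A_{e_5}=2, dim A_{e_1+e_3}=dim A_{e_1+e_5}=dim A_{e_3+e_5}=1, and dim A_{e_1+e_3+e_5}=2. -/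

import Mathlib

/-- There is no standard multigraded algebra whose graded dimensions match the
cd-polynomial c⁶ + 2(dc⁴+c²dc²+c⁴d) + (c²d²+dc²d+d²c²) + 2d³: no commutative
ℤ⁶-graded k-algebra A with A₀ = k, generated in the degrees eᵢ, with
dim A_{e₁} = dim A_{e₃} = dim A_{e₅} = 2, the three pairwise sums of
dimension 1, and dim A_{e₁+e₃+e₅} = 2. (Here e₁,e₃,e₅ are indexed 0,2,4.) -/
theorem stmt15 (k A : Type) [Field k] [CommRing A] [Algebra k A]
    (𝒜 : (Fin 6 → ℕ) → Submodule k A) [GradedAlgebra 𝒜]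
    (hgen : Algebra.adjoin k (⋃ i : Fin 6, (𝒜 (Pi.single i 1) : Set A)) = ⊤)
    (h0 : Module.finrank k (𝒜 0) = 1)
    (h1 : Module.finrank k (𝒜 (Pi.single 0 1)) = 2)
    (h3 : Module.finrank k (𝒜 (Pi.single 2 1)) = 2)
    (h5 : Module.finrank k (𝒜 (Pi.single 4 1)) = 2)
    (h13 : Module.finrank k (𝒜 (Pi.single 0 1 + Pi.single 2 1)) = 1)
    (h15 : Module.finrank k (𝒜 (Pi.single 0 1 + Pi.single 4 1)) = 1)
    (h35 : Module.finrank k (𝒜 (Pi.single 2 1 + Pi.single 4 1)) = 1)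
    (h135 : Module.finrank k
      (𝒜 (Pi.single 0 1 + Pi.single 2 1 + Pi.single 4 1)) = 2) :
    False := by
  classical
  set M : (Fin 6 → ℕ) → Submodule k A :=
    fun v => ∏ i : Fin 6, (𝒜 (Pi.single i 1)) ^ (v i) with hMdef
  have Mmul : ∀ u v : Fin 6 → ℕ, M u * M v = M (u + v) := by
    intro u v
    simp only [hMdef, ← Finset.prod_mul_distrib, ← pow_add, Pi.add_apply]
  have hMe : ∀ i : Fin 6, M (Pi.single i 1) = 𝒜 (Pi.single i 1) := by
    intro i
    simp only [hMdef]
    rw [Finset.prod_eq_single i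
      (fun j _ hj => by rw [Pi.single_eq_of_ne hj, pow_zero]) (by simp)]
    rw [Pi.single_eq_same, pow_one]
  -- every graded component of every element lies in the span of monomials
  have key : ∀ x : A, ∀ v, (DirectSum.decompose 𝒜 x v : A) ∈ M v := by
    intro x
    have hx : x ∈ Subalgebra.toSubmodule
        (Algebra.adjoin k (⋃ i : Fin 6, (𝒜 (Pi.single i 1) : Set A))) := by
      rw [hgen]; trivial
    rw [Algebra.adjoin_eq_span] at hx
    induction hx using Submodule.span_induction with
    | mem y hy =>
      induction hy using Submonoid.closure_induction with
      | mem z hz =>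
        obtain ⟨i, hzi⟩ := Set.mem_iUnion.mp hz
        intro v
        by_cases hv : v = Pi.single i 1
        · subst hv
          rw [DirectSum.decompose_of_mem_same 𝒜 hzi]
          rw [hMe i]; exact hzi
        · rw [DirectSum.decompose_of_mem_ne 𝒜 hzi (fun h => hv h.symm)]
          exact zero_mem _
      | one =>
        intro v
        by_cases hv : v = 0
        · subst hv
          rw [DirectSum.decompose_of_mem_same 𝒜 (SetLike.one_mem_graded 𝒜)]
          have hM : M 0 = 1 := by
            simp [hMdef]
          rw [hM]
          exact Submodule.one_le.mp le_rfl
        · rw [DirectSum.decompose_of_mem_ne 𝒜 (SetLike.one_mem_graded 𝒜)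
            (fun h => hv h.symm)]
          exact zero_mem _
      | mul a b ha hb iha ihb =>
        intro v
        rw [DirectSum.decompose_mul, DirectSum.coe_mul_apply]
        apply Submodule.sum_mem
        rintro ⟨i1, i2⟩ hij
        have h12 : i1 + i2 = v := (Finset.mem_filter.mp hij).2
        rw [← h12, ← Mmul]
        exact Submodule.mul_mem_mul (iha i1) (ihb i2)
    | zero => intro v; rw [DirectSum.decompose_zero]; simp
    | add a b ha hb iha ihb =>
      intro v
      rw [DirectSum.decompose_add]
      simpa using add_mem (iha v) (ihb v)
    | smul c a ha iha =>
      intro v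
      rw [DirectSum.decompose_smul]
      simpa [DirectSum.smul_apply] using Submodule.smul_mem _ c (iha v)
  have compMem : ∀ v, ∀ x ∈ 𝒜 v, x ∈ M v := fun v x hx => by
    rw [← DirectSum.decompose_of_mem_same 𝒜 hx]; exact key x v
  -- compute the relevant products of submodules
  have hM13 : M (Pi.single 0 1 + Pi.single 2 1) =
      𝒜 (Pi.single 0 1) * 𝒜 (Pi.single 2 1) := by
    rw [← Mmul, hMe 0, hMe 2]
  have hM135 : M (Pi.single 0 1 + Pi.single 2 1 + Pi.single 4 1) =
      𝒜 (Pi.single 0 1) * 𝒜 (Pi.single 2 1) * 𝒜 (Pi.single 4 1) := by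
    rw [← Mmul, hM13, hMe 4]
  -- pick generators of the one-dimensional pieces
  obtain ⟨t, ht0, htspan⟩ := finrank_eq_one_iff'.mp h13
  obtain ⟨s, hs0, hsspan⟩ := finrank_eq_one_iff'.mp h35
  -- a nonzero product v0 * w0
  have hex : ∃ v0 ∈ 𝒜 (Pi.single (0:Fin 6) 1), ∃ w0 ∈ 𝒜 (Pi.single (2:Fin 6) 1),
      v0 * w0 ≠ 0 := by
    by_contra hc
    push_neg at hc
    have htz : (t : A) = 0 := by
      have hmem := compMem _ _ t.2
      rw [hM13] at hmem
      exact Submodule.mul_induction_on hmem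
        (fun m hm n hn => hc m hm n hn)
        (fun x y hx hy => by rw [hx, hy, add_zero])
    exact ht0 (Subtype.ext htz)
  obtain ⟨v0, hv0, w0, hw0, hvw0⟩ := hex
  have hvwmem : v0 * w0 ∈ 𝒜 (Pi.single 0 1 + Pi.single 2 1) :=
    SetLike.mul_mem_graded hv0 hw0
  obtain ⟨c, hc⟩ := htspan ⟨v0 * w0, hvwmem⟩
  have hcA : c • (t : A) = v0 * w0 := congrArg Subtype.val hc
  have hcne : c ≠ 0 := by
    rintro rfl
    rw [zero_smul] at hcA
    exact hvw0 hcA.symm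
  have htA : (t : A) = c⁻¹ • (v0 * w0) := by
    rw [← hcA, smul_smul, inv_mul_cancel₀ hcne, one_smul]
  -- the top piece is contained in the span of a single element
  set z : A := v0 * (s : A) with hz
  have hle : 𝒜 (Pi.single 0 1 + Pi.single 2 1 + Pi.single 4 1) ≤
      Submodule.span k {z} := by
    intro x hx
    have hmem := compMem _ _ hx
    rw [hM135] at hmem
    refine Submodule.mul_induction_on hmem ?_ (fun a b ha hb => add_mem ha hb)
    intro y hy u hu
    refine Submodule.mul_induction_on hy ?_ ?_
    · intro a ha b hb
      -- a * b * u ∈ span {z}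
      have habmem : a * b ∈ 𝒜 (Pi.single 0 1 + Pi.single 2 1) :=
        SetLike.mul_mem_graded ha hb
      obtain ⟨c1, hc1⟩ := htspan ⟨a * b, habmem⟩
      have hc1A : c1 • (t : A) = a * b := congrArg Subtype.val hc1
      have hwumem : w0 * u ∈ 𝒜 (Pi.single 2 1 + Pi.single 4 1) :=
        SetLike.mul_mem_graded hw0 hu
      obtain ⟨c2, hc2⟩ := hsspan ⟨w0 * u, hwumem⟩
      have hc2A : c2 • (s : A) = w0 * u := congrArg Subtype.val hc2
      refine Submodule.mem_span_singleton.mpr ⟨c1 * c⁻¹ * c2, ?_⟩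
      rw [hz]
      calc (c1 * c⁻¹ * c2) • (v0 * (s : A))
          = (c1 * c⁻¹) • (v0 * (c2 • (s : A))) := by
            rw [mul_smul_comm, smul_smul, mul_assoc]
        _ = (c1 * c⁻¹) • (v0 * (w0 * u)) := by rw [hc2A]
        _ = c1 • ((c⁻¹ • (v0 * w0)) * u) := by
            rw [smul_mul_assoc, smul_smul, mul_assoc]
        _ = c1 • ((t : A) * u) := by rw [← htA]
        _ = (c1 • (t : A)) * u := by rw [smul_mul_assoc]
        _ = a * b * u := by rw [hc1A]
    · intro x1 x2 hx1 hx2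
      rw [add_mul]
      exact add_mem hx1 hx2
  -- contradiction with dimensions
  have hrank : Module.rank k (𝒜 (Pi.single 0 1 + Pi.single 2 1 + Pi.single 4 1))
      ≤ 1 := by
    refine le_trans (Submodule.rank_mono hle) ?_
    simpa using rank_span_le (R := k) {z}
  have : Module.finrank k
      (𝒜 (Pi.single 0 1 + Pi.single 2 1 + Pi.single 4 1)) ≤ 1 :=
    Module.finrank_le_of_rank_le (by exact_mod_cast hrank)
  omega
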